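/- arXiv:1202.0276 — 2 statements merged into one kernel-verified Lean document; each statement's English description precedes it below -/
import Mathlib

section
/- Fix j ≥ 1 and s ≥ 0 with λ = 1, and let g be the corresponding solution sequence (value mj + 1 repeated s + mj + 1 times for each m ≥ 0, preceded by one extra 1). If n = p_m := 1 + ∑_{i=0}^{m}(s + ij + 1), then g(n) = (m+1)j + 1, and this value satisfies the quadratic equation g(n)² + (2s − j)·g(n) + (3j − 2s − 1 − 2jn) = 0. -/
def golombThresh (j s m : ℕ) : ℕ := 1 + ∑ i ∈ Finset.range m, (s + i * j + 1)

def golombW (j s n : ℕ) : ℕ :=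
  j * Nat.findGreatest (fun m => golombThresh j s m ≤ n) n + 1

def golombP (j s m : ℕ) : ℕ := golombThresh j s (m + 1)

lemma golombThresh_mono (j s : ℕ) : StrictMono (golombThresh j s) := by
  apply strictMono_nat_of_lt_succ
  intro m
  unfold golombThresh
  rw [Finset.sum_range_succ]
  omega

lemma sum_closed (j s : ℕ) (M : ℕ) :
    2 * ∑ i ∈ Finset.range M, ((s : ℤ) + i * j + 1) =
      2 * M * (s + 1) + j * M * (M - 1) := by
  induction M with
  | zero => simp
  | succ M ih =>
    rw [Finset.sum_range_succ, mul_add, ih]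
    push_cast
    ring

/-- At leaf-label positions `n = p_m`, the value is `(m+1)j + 1` and it satisfies
    the quadratic `g(n)² + (2s − j)g(n) + (3j − 2s − 1 − 2jn) = 0`. -/
theorem golombW_at_leaf (j s : ℕ) (hj : 1 ≤ j) (m n : ℕ) (hn : n = golombP j s m) :
    golombW j s n = (m + 1) * j + 1 ∧
      (golombW j s n : ℤ) ^ 2 + (2 * (s : ℤ) - j) * golombW j s n +
        (3 * (j : ℤ) - 2 * s - 1 - 2 * j * n) = 0 := by
  subst hn
  have hfg : Nat.findGreatest (fun k => golombThresh j s k ≤ golombP j s m) (golombP j s m)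
      = m + 1 := by
    have hbig : m + 1 < golombP j s m := by
      have h1 : m + 1 ≤ ∑ i ∈ Finset.range (m+1), (s + i * j + 1) := by
        calc m + 1 = ∑ _i ∈ Finset.range (m+1), 1 := by simp
        _ ≤ ∑ i ∈ Finset.range (m+1), (s + i * j + 1) := by
              apply Finset.sum_le_sum; intro i _; omega
      simp only [golombP, golombThresh]
      omega
    rw [Nat.findGreatest_eq_iff]
    refine ⟨le_of_lt hbig, fun _ => le_refl _, ?_⟩
    intro k hk hk' hcontra
    have : golombThresh j s (m + 1) < golombThresh j s k := golombThresh_mono j s hk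
    simp only [golombP] at hcontra
    omega
  have hn' : ((golombP j s m : ℕ) : ℤ)
      = 1 + ∑ i ∈ Finset.range (m + 1), ((s : ℤ) + i * j + 1) := by
    simp only [golombP, golombThresh]
    push_cast
    ring
  have hs := sum_closed j s (m + 1)
  constructor
  · simp [golombW, hfg, Nat.mul_comm]
  · simp only [golombW, hfg]
    push_cast at hs hn' ⊢
    linear_combination (-2*(j:ℤ)) * hn' + (-(j:ℤ)) * hs
end

section
/- Fix j ≥ 1 and s ≥ j, write s = qj + r with 0 ≤ r < j, and set α = ∑_{i=0}^{q−1}(r + ij + 1). Let g_{j,s} and g_{j,r} denote the solutions of the generalized Golomb recursion g(n) = g(n − s − g(n−j)) + j with λ = 1 and parameters (j, s) and (j, r) respectively (given explicitly as the block sequences with value mj + 1 repeated s + mj + 1 times, resp. r + mj + 1 times). Then for all n ≥ 1, g_{j,s}(n) = g_{j,r}(n + α) − qj. -/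
lemma golombThresh_shift (j s q r : ℕ) (hqr : s = q * j + r) (m : ℕ) :
    golombThresh j r (q + m)
      = (∑ i ∈ Finset.range q, (r + i * j + 1)) + golombThresh j s m := by
  unfold golombThresh
  rw [Finset.sum_range_add]
  have h : ∀ i, r + (q + i) * j + 1 = s + i * j + 1 := by
    intro i; subst hqr; ring
  simp only [h]
  ring

lemma golombThresh_ge (j s m : ℕ) : m + 1 ≤ golombThresh j s m := by
  unfold golombThresh
  have : ∑ i ∈ Finset.range m, 1 ≤ ∑ i ∈ Finset.range m, (s + i * j + 1) :=
    Finset.sum_le_sum (fun i _ => by omega)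
  simp at this
  omega

/-- Reduction of parameters: for `s = qj + r ≥ j` with `0 ≤ r < j` and
    `α = ∑_{i=0}^{q−1} (r + ij + 1)`, one has `g_{j,s}(n) = g_{j,r}(n + α) − qj`. -/
theorem golombW_reduce (j s q r α : ℕ) (hj : 1 ≤ j) (hs : j ≤ s)
    (hqr : s = q * j + r) (hr : r < j)
    (hα : α = ∑ i ∈ Finset.range q, (r + i * j + 1)) :
    ∀ n, 1 ≤ n → golombW j s n = golombW j r (n + α) - q * j := by
  intro n hn
  have hαq : q ≤ α := by
    have : ∑ i ∈ Finset.range q, 1 ≤ ∑ i ∈ Finset.range q, (r + i * j + 1) :=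
      Finset.sum_le_sum (fun i _ => by omega)
    simp at this; omega
  set P : ℕ → Prop := fun m => golombThresh j s m ≤ n with hP
  set M := Nat.findGreatest P n with hM
  have hPM : P M := by
    apply Nat.findGreatest_spec (Nat.zero_le n)
    show golombThresh j s 0 ≤ n
    simpa [golombThresh] using hn
  have hMn : M ≤ n := Nat.findGreatest_le n
  have key : Nat.findGreatest (fun m => golombThresh j r m ≤ n + α) (n + α) = q + M := by
    rw [Nat.findGreatest_eq_iff]
    refine ⟨by omega, fun _ => ?_, fun m hm _ => ?_⟩
    · rw [golombThresh_shift j s q r hqr M, hα]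
      omega
    · intro hcon
      have hm' : q ≤ m := by omega
      obtain ⟨k, rfl⟩ := Nat.exists_eq_add_of_le hm'
      rw [golombThresh_shift j s q r hqr k, hα] at hcon
      have hkn : golombThresh j s k ≤ n := by omega
      have hkM : M < k := by omega
      rcases le_or_gt k n with h | h
      · exact Nat.findGreatest_is_greatest hkM h hkn
      · have := golombThresh_ge j s k; omega
  unfold golombW
  rw [key]
  have hMeq : Nat.findGreatest (fun m => golombThresh j s m ≤ n) n = M := rfl
  rw [hMeq]
  have : j * (q + M) = q * j + j * M := by ring
  omega
end
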